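/- Let Σ > 0 and Φ the standard normal CDF with density Φ'. For every a, b ≥ 0, one has x(1 − Φ(x)) ≤ Φ'(x) for x = (a + b)/Σ; consequently ∫∫ [−(δ(σ_a)+δ(σ_b))(1 − Φ((δ(σ_a)+δ(σ_b))/Σ_ρ)) + Σ_ρ Φ'((δ(σ_a)+δ(σ_b))/Σ_ρ)] dσ_a dσ_b > 0 for any nonnegative bounded measurable δ on [σ₋, σ₊], where Σ_ρ = √(σ_a² + σ_b² − 2ρσ_aσ_b) and ρ ∈ (−1, 1) with Σ_ρ > 0 on the domain. -/

import Mathlib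

open Real MeasureTheory

noncomputable def stdPhi (x : ℝ) : ℝ := ∫ t in Set.Iic x, Real.exp (-t^2/2) / Real.sqrt (2*Real.pi)

noncomputable def stdPhi' (x : ℝ) : ℝ := Real.exp (-x^2/2) / Real.sqrt (2*Real.pi)

noncomputable def gpdf (t : ℝ) : ℝ := Real.exp (-t^2/2) / Real.sqrt (2*Real.pi)

lemma gpdf_pos (t : ℝ) : 0 < gpdf t :=
  div_pos (exp_pos _) (Real.sqrt_pos.2 (by positivity))

lemma exp_eq (t : ℝ) : Real.exp (-t^2/2) = Real.exp (-(1/2) * t^2) := by ring_nf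

lemma integrable_gpdf : Integrable gpdf := by
  have h := integrable_exp_neg_mul_sq (by norm_num : (0:ℝ) < 1/2)
  have : Integrable fun t : ℝ => Real.exp (-(1/2) * t^2) / Real.sqrt (2*Real.pi) := h.div_const _
  refine this.congr ?_
  filter_upwards with t
  rw [gpdf, exp_eq]

lemma integral_gpdf : ∫ t, gpdf t = 1 := by
  have h : ∫ t : ℝ, Real.exp (-(1/2) * t^2) = Real.sqrt (2*Real.pi) := by
    rw [integral_gaussian]
    congr 1
    rw [div_div_eq_mul_div, div_one, mul_comm]
  have h2 : ∫ t : ℝ, Real.exp (-t^2/2) = Real.sqrt (2*Real.pi) := by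
    rw [← h]; exact integral_congr_ae (Filter.Eventually.of_forall fun t => exp_eq t)
  unfold gpdf
  rw [integral_div, h2, div_self (by positivity)]

lemma stdPhi_eq (x : ℝ) : stdPhi x = ∫ t in Set.Iic x, gpdf t := rfl

lemma stdPhi_nonneg (x : ℝ) : 0 ≤ stdPhi x := by
  rw [stdPhi_eq]
  exact setIntegral_nonneg measurableSet_Iic fun t _ => (gpdf_pos t).le

lemma stdPhi_le_one (x : ℝ) : stdPhi x ≤ 1 := by
  rw [stdPhi_eq, ← integral_gpdf]
  exact setIntegral_le_integral integrable_gpdf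
    (Filter.Eventually.of_forall fun t => (gpdf_pos t).le)

lemma one_sub_stdPhi (x : ℝ) : 1 - stdPhi x = ∫ t in Set.Ioi x, gpdf t := by
  have := intervalIntegral.integral_Iic_add_Ioi (μ := volume) (b := x)
    integrable_gpdf.integrableOn integrable_gpdf.integrableOn
  rw [stdPhi_eq, ← integral_gpdf]
  linarith [this]

lemma integral_tail_mul (z : ℝ) : ∫ t in Set.Ioi z, t * gpdf t = stdPhi' z := by
  have hint : IntegrableOn (fun t : ℝ => t * Real.exp (-t^2/2)) (Set.Ioi z) := by
    have h := (integrable_mul_exp_neg_mul_sq (by norm_num : (0:ℝ) < 1/2)).integrableOn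
      (s := Set.Ioi z)
    refine h.congr_fun ?_ measurableSet_Ioi
    intro t _
    simp only [exp_eq]
  have hderiv : ∀ t ∈ Set.Ici z,
      HasDerivAt (fun t : ℝ => -Real.exp (-t^2/2)) (t * Real.exp (-t^2/2)) t := by
    intro t _
    have h1 : HasDerivAt (fun t : ℝ => -t^2/2) (-t) t := by
      have h2 := ((hasDerivAt_pow 2 t).div_const 2).neg
      have heq : (fun t : ℝ => -t^2/2) = fun t : ℝ => -(t^2/2) :=
        funext fun t => by ring
      rw [heq]
      refine h2.congr_deriv ?_
      simp
    have := (h1.exp).neg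
    refine this.congr_deriv ?_
    ring
  have htend : Filter.Tendsto (fun t : ℝ => -Real.exp (-t^2/2)) Filter.atTop (nhds 0) := by
    rw [show (0:ℝ) = -0 by ring]
    refine Filter.Tendsto.neg ?_
    refine Real.tendsto_exp_atBot.comp ?_
    have h3 : Filter.Tendsto (fun t : ℝ => t^2/2) Filter.atTop Filter.atTop :=
      (Filter.tendsto_pow_atTop (by norm_num)).atTop_div_const (by norm_num)
    have h4 := Filter.tendsto_neg_atBot_iff.2 h3
    refine h4.congr fun t => by ring
  have key := integral_Ioi_of_hasDerivAt_of_tendsto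
    (f := fun t : ℝ => -Real.exp (-t^2/2)) (a := z)
    ((Continuous.continuousWithinAt (by continuity))) (fun t ht => hderiv t ht.out.le) hint htend
  have : ∫ t in Set.Ioi z, t * gpdf t
      = (∫ t in Set.Ioi z, t * Real.exp (-t^2/2)) / Real.sqrt (2*Real.pi) := by
    rw [← integral_div]
    exact setIntegral_congr_fun measurableSet_Ioi fun t _ => by rw [gpdf]; ring
  rw [this, key]
  rw [stdPhi']
  ring

lemma mills (z : ℝ) (_hz : 0 ≤ z) : z * (1 - stdPhi z) < stdPhi' z := by
  have hg : IntegrableOn gpdf (Set.Ioi z) := integrable_gpdf.integrableOn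
  have htg : IntegrableOn (fun t : ℝ => t * gpdf t) (Set.Ioi z) := by
    have h := (integrable_mul_exp_neg_mul_sq (by norm_num : (0:ℝ) < 1/2)).div_const
      (Real.sqrt (2*Real.pi))
    refine (h.integrableOn (s := Set.Ioi z)).congr_fun ?_ measurableSet_Ioi
    intro t _
    simp only [gpdf, exp_eq]
    ring
  have h1 : z * (1 - stdPhi z) = ∫ t in Set.Ioi z, z * gpdf t := by
    rw [one_sub_stdPhi, integral_const_mul]
  have h2 : stdPhi' z - z * (1 - stdPhi z) = ∫ t in Set.Ioi z, (t - z) * gpdf t := by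
    rw [h1, ← integral_tail_mul z, ← integral_sub htg (hg.const_mul z)]
    refine integral_congr_ae (Filter.Eventually.of_forall fun t => ?_)
    ring
  have hpos : 0 < ∫ t in Set.Ioi z, (t - z) * gpdf t := by
    rw [setIntegral_pos_iff_support_of_nonneg_ae]
    · have hsub : Set.Ioi z ⊆ Function.support (fun t => (t - z) * gpdf t) ∩ Set.Ioi z := by
        intro t ht
        refine ⟨?_, ht⟩
        have : 0 < (t - z) * gpdf t := mul_pos (by simpa using ht) (gpdf_pos t)
        exact ne_of_gt this
      have : (volume (Set.Ioi z)) ≤ volume _ := measure_mono hsub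
      have hIoi : volume (Set.Ioi z) = ⊤ := by simp
      refine lt_of_lt_of_le ?_ this
      rw [hIoi]; exact ENNReal.zero_lt_top
    · refine (MeasureTheory.ae_restrict_iff' measurableSet_Ioi).2
        (Filter.Eventually.of_forall fun t ht => ?_)
      exact mul_nonneg (by simp at ht; linarith) (gpdf_pos t).le
    · have h5 : IntegrableOn ((fun t : ℝ => t * gpdf t) - fun t => z * gpdf t)
          (Set.Ioi z) := htg.sub (hg.const_mul z)
      exact h5.congr_fun (fun t _ => by simp [Pi.sub_apply]; ring) measurableSet_Ioi
  linarith

lemma stdPhi_mono : Monotone stdPhi := by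
  intro x y hxy
  rw [stdPhi_eq, stdPhi_eq]
  exact setIntegral_mono_set integrable_gpdf.integrableOn
    (Filter.Eventually.of_forall fun t => (gpdf_pos t).le)
    (HasSubset.Subset.eventuallyLE (Set.Iic_subset_Iic.2 hxy))

lemma stdPhi_measurable : Measurable stdPhi := stdPhi_mono.measurable

lemma stdPhi'_continuous : Continuous stdPhi' := by
  unfold stdPhi'; continuity

lemma stdPhi'_le (x : ℝ) : stdPhi' x ≤ 1 := by
  unfold stdPhi'
  rw [div_le_one (by positivity)]
  calc Real.exp (-x^2/2) ≤ Real.exp 0 := Real.exp_le_exp.2 (by nlinarith [sq_nonneg x])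
    _ = 1 := Real.exp_zero
    _ ≤ Real.sqrt (2*Real.pi) := by
        rw [show (1:ℝ) = Real.sqrt 1 by simp]
        exact Real.sqrt_le_sqrt (by nlinarith [Real.pi_gt_three])

lemma stdPhi'_pos (x : ℝ) : 0 < stdPhi' x := gpdf_pos x

/-- Mills-ratio bound at `(a+b)/S` for `a, b ≥ 0`, and strict positivity of the
double integral appearing in the half-linear no-NE proof. -/
theorem half_linear_no_NE_integral (S : ℝ) (hS : 0 < S)
    (σm σp ρ : ℝ) (h0 : 0 < σm) (h1 : σm < σp) (hρ : ρ ∈ Set.Ioo (-1 : ℝ) 1)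
    (hSρ : ∀ σa ∈ Set.Icc σm σp, ∀ σb ∈ Set.Icc σm σp,
      0 < Real.sqrt (σa^2 + σb^2 - 2*ρ*σa*σb))
    (δ : ℝ → ℝ) (hδmeas : Measurable δ) (hδnonneg : ∀ s : ℝ, 0 ≤ δ s)
    (hδbdd : ∃ M : ℝ, ∀ s : ℝ, |δ s| ≤ M) :
    (∀ a b : ℝ, 0 ≤ a → 0 ≤ b →
      ((a + b)/S) * (1 - stdPhi ((a + b)/S)) ≤ stdPhi' ((a + b)/S)) ∧
    0 < ∫ σa in Set.Icc σm σp, ∫ σb in Set.Icc σm σp,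
      (-(δ σa + δ σb) * (1 - stdPhi ((δ σa + δ σb) / Real.sqrt (σa^2 + σb^2 - 2*ρ*σa*σb)))
        + Real.sqrt (σa^2 + σb^2 - 2*ρ*σa*σb) *
          stdPhi' ((δ σa + δ σb) / Real.sqrt (σa^2 + σb^2 - 2*ρ*σa*σb))) := by
  obtain ⟨M, hM⟩ := hδbdd
  have hM0 : 0 ≤ M := le_trans (abs_nonneg _) (hM 0)
  constructor
  · intro a b ha hb
    exact (mills _ (div_nonneg (by linarith) hS.le)).le
  set K := Set.Icc σm σp with hKdef
  have hK : MeasurableSet K := measurableSet_Icc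
  have hKvol : volume K = ENNReal.ofReal (σp - σm) := Real.volume_Icc
  have hKpos : 0 < volume K := by
    rw [hKvol]; exact ENNReal.ofReal_pos.2 (by linarith)
  have hKfin : volume K < ⊤ := by rw [hKvol]; exact ENNReal.ofReal_lt_top
  haveI : IsFiniteMeasure (volume.restrict K) :=
    ⟨by rw [Measure.restrict_apply_univ]; exact hKfin⟩
  set F : ℝ × ℝ → ℝ := fun p =>
    -(δ p.1 + δ p.2) * (1 - stdPhi ((δ p.1 + δ p.2) /
        Real.sqrt (p.1^2 + p.2^2 - 2*ρ*p.1*p.2)))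
      + Real.sqrt (p.1^2 + p.2^2 - 2*ρ*p.1*p.2) *
        stdPhi' ((δ p.1 + δ p.2) / Real.sqrt (p.1^2 + p.2^2 - 2*ρ*p.1*p.2)) with hFdef
  have hc : Measurable fun p : ℝ × ℝ => δ p.1 + δ p.2 :=
    (hδmeas.comp measurable_fst).add (hδmeas.comp measurable_snd)
  have hsm : Measurable fun p : ℝ × ℝ => Real.sqrt (p.1^2 + p.2^2 - 2*ρ*p.1*p.2) := by
    apply Measurable.sqrt
    fun_prop
  have hzm : Measurable fun p : ℝ × ℝ => (δ p.1 + δ p.2) /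
      Real.sqrt (p.1^2 + p.2^2 - 2*ρ*p.1*p.2) := hc.div hsm
  have hF : Measurable F := by
    exact ((hc.neg).mul (measurable_const.sub (stdPhi_measurable.comp hzm))).add
      (hsm.mul (stdPhi'_continuous.measurable.comp hzm))
  -- pointwise positivity on K × K
  have hFpos : ∀ a ∈ K, ∀ b ∈ K, 0 < F (a, b) := by
    intro a ha b hb
    have hs0 : 0 < Real.sqrt (a^2 + b^2 - 2*ρ*a*b) := hSρ a ha b hb
    set s := Real.sqrt (a^2 + b^2 - 2*ρ*a*b)
    set c := δ a + δ b with hcdef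
    have hc0 : 0 ≤ c := add_nonneg (hδnonneg a) (hδnonneg b)
    set z := c / s with hzdef
    have hz0 : 0 ≤ z := div_nonneg hc0 hs0.le
    have hzs : z * s = c := div_mul_cancel₀ c hs0.ne'
    have hmi := mills z hz0
    have h6 : c * (1 - stdPhi z) < s * stdPhi' z := by
      have h7 := mul_lt_mul_of_pos_left hmi hs0
      calc c * (1 - stdPhi z) = s * (z * (1 - stdPhi z)) := by rw [← hzs]; ring
        _ < s * stdPhi' z := h7
    show 0 < -c * (1 - stdPhi (c / s)) + s * stdPhi' (c / s)
    rw [← hzdef]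
    linarith
  -- uniform bound on K × K
  set C : ℝ := 2*M + 2*σp with hCdef
  have hFbdd : ∀ a ∈ K, ∀ b ∈ K, ‖F (a, b)‖ ≤ C := by
    intro a ha b hb
    obtain ⟨ha1, ha2⟩ := ha
    obtain ⟨hb1, hb2⟩ := hb
    have hs0 : 0 < Real.sqrt (a^2 + b^2 - 2*ρ*a*b) := hSρ a ⟨ha1, ha2⟩ b ⟨hb1, hb2⟩
    set s := Real.sqrt (a^2 + b^2 - 2*ρ*a*b)
    set c := δ a + δ b
    set z := c / s
    have hc2M : |c| ≤ 2*M := by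
      calc |c| ≤ |δ a| + |δ b| := abs_add_le _ _
        _ ≤ 2*M := by linarith [hM a, hM b]
    have hsle : s ≤ 2*σp := by
      have harg : a^2 + b^2 - 2*ρ*a*b ≤ (2*σp)^2 := by
        nlinarith [hρ.1, hρ.2, mul_pos (lt_of_lt_of_le h0 ha1) (lt_of_lt_of_le h0 hb1)]
      calc s ≤ Real.sqrt ((2*σp)^2) := Real.sqrt_le_sqrt harg
        _ = 2*σp := Real.sqrt_sq (by linarith)
    have hΦ : |1 - stdPhi z| ≤ 1 :=
      abs_le.2 ⟨by linarith [stdPhi_le_one z], by linarith [stdPhi_nonneg z]⟩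
    calc ‖F (a, b)‖ ≤ ‖-c * (1 - stdPhi z)‖ + ‖s * stdPhi' z‖ := norm_add_le _ _
      _ = |c| * |1 - stdPhi z| + s * stdPhi' z := by
          rw [Real.norm_eq_abs, Real.norm_eq_abs, abs_mul, abs_mul, abs_neg,
            abs_of_pos hs0, abs_of_pos (stdPhi'_pos z)]
      _ ≤ 2*M * 1 + 2*σp * 1 := by
          have hb1' : |c| * |1 - stdPhi z| ≤ 2*M * 1 :=
            mul_le_mul hc2M hΦ (abs_nonneg _) (by linarith)
          have hb2' : s * stdPhi' z ≤ 2*σp * 1 :=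
            mul_le_mul hsle (stdPhi'_le z) (stdPhi'_pos z).le (by linarith)
          linarith
      _ = C := by ring
  -- inner integrability
  have hInner : ∀ a ∈ K, IntegrableOn (fun b => F (a, b)) K := by
    intro a ha
    refine ⟨(hF.comp (measurable_prodMk_left)).aestronglyMeasurable, ?_⟩
    refine MeasureTheory.HasFiniteIntegral.of_bounded (C := C) ?_
    refine (ae_restrict_iff' hK).2 (Filter.Eventually.of_forall fun b hb => ?_)
    exact hFbdd a ha b hb
  -- inner positivity
  have hGpos : ∀ a ∈ K, 0 < ∫ b in K, F (a, b) := by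
    intro a ha
    rw [setIntegral_pos_iff_support_of_nonneg_ae]
    · refine lt_of_lt_of_le hKpos (measure_mono ?_)
      intro b hb
      exact ⟨ne_of_gt (hFpos a ha b hb), hb⟩
    · refine (ae_restrict_iff' hK).2 (Filter.Eventually.of_forall fun b hb => ?_)
      exact (hFpos a ha b hb).le
    · exact hInner a ha
  -- measurability of the inner integral
  set G : ℝ → ℝ := fun a => ∫ b in K, F (a, b) with hGdef
  have hGmeas : StronglyMeasurable G :=
    hF.stronglyMeasurable.integral_prod_right'
  have hGbdd : ∀ a ∈ K, ‖G a‖ ≤ C * (volume K).toReal := by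
    intro a ha
    exact norm_setIntegral_le_of_norm_le_const hKfin (fun b hb => hFbdd a ha b hb)
  have hGint : IntegrableOn G K := by
    refine ⟨hGmeas.aestronglyMeasurable, ?_⟩
    refine MeasureTheory.HasFiniteIntegral.of_bounded (C := C * (volume K).toReal) ?_
    exact (ae_restrict_iff' hK).2 (Filter.Eventually.of_forall hGbdd)
  -- conclude
  have : 0 < ∫ a in K, G a := by
    rw [setIntegral_pos_iff_support_of_nonneg_ae]
    · refine lt_of_lt_of_le hKpos (measure_mono ?_)
      intro a ha
      exact ⟨ne_of_gt (hGpos a ha), ha⟩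
    · refine (ae_restrict_iff' hK).2 (Filter.Eventually.of_forall fun a ha => ?_)
      exact (hGpos a ha).le
    · exact hGint
  exact this
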